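/- Let n be a positive natural number, let φ : ℝⁿ → ℝ be twice continuously differentiable, and define the Witten Laplacian L h = Δh - ∇φ · ∇h for h : ℝⁿ → ℝ. Then for every three-times continuously differentiable g : ℝⁿ → ℝ the pointwise Bochner identity holds: (1/2) · L( ‖∇g‖² ) = ‖∇²g‖_F² + ⟨∇g, ∇(Lg)⟩ + (∇g)ᵀ (∇²φ) (∇g), where ‖∇²g‖_F² = Σ_{i,j=1}^{n} (∂²g/∂xᵢ∂xⱼ)² is the squared Frobenius norm of the Hessian of g and ∇²φ is the Hessian matrix of φ. -/

import Mathlib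

open MeasureTheory Real
open scoped BigOperators RealInnerProductSpace

noncomputable section

section Helpers
variable {n : ℕ}
variable {n : ℕ}
abbrev E' (n:ℕ) := EuclideanSpace ℝ (Fin n)

def pd (f : E' n → ℝ) (i : Fin n) (x : E' n) : ℝ := fderiv ℝ f x (EuclideanSpace.single i 1)

theorem contDiff_pd {f : E' n → ℝ} {m k : WithTop ℕ∞} (hf : ContDiff ℝ k f) (h : m + 1 ≤ k)
    (i : Fin n) : ContDiff ℝ m (pd f i) :=
  (hf.fderiv_right h).clm_apply contDiff_const

theorem grad_coord (f : E' n → ℝ) (x : E' n) (i : Fin n) : gradient f x i = pd f i x := by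
  have h1 : gradient f x i = ⟪gradient f x, EuclideanSpace.single i 1⟫ := by
    rw [EuclideanSpace.inner_single_right]; simp
  rw [h1, gradient, InnerProductSpace.toDual_symm_apply]; rfl

theorem inner_sum_coord (u v : E' n) : ⟪u, v⟫ = ∑ i, u i * v i := by
  simp [PiLp.inner_apply, RCLike.inner_apply]; exact Finset.sum_congr rfl fun _ _ => mul_comm _ _

theorem pd_pd_eq_snd (f : E' n → ℝ) (hf : ContDiff ℝ 2 f) (x : E' n) (i j : Fin n) :
    pd (pd f j) i x = fderiv ℝ (fderiv ℝ f) x (EuclideanSpace.single i 1) (EuclideanSpace.single j 1) := by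
  have hd : DifferentiableAt ℝ (fderiv ℝ f) x :=
    ((hf.fderiv_right (m := 1) le_rfl).differentiable (by norm_num)) x
  have : pd f j = fun y => (fderiv ℝ f y) ((fun _ : E' n => EuclideanSpace.single j (1:ℝ)) y) := rfl
  rw [pd, this, fderiv_clm_apply hd (differentiableAt_const _)]
  simp

theorem pd_comm {f : E' n → ℝ} (hf : ContDiff ℝ 2 f) (i j : Fin n) (x : E' n) :
    pd (pd f j) i x = pd (pd f i) j x := by
  rw [pd_pd_eq_snd f hf x i j, pd_pd_eq_snd f hf x j i]
  exact (hf.contDiffAt.isSymmSndFDerivAt (by norm_num)) _ _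

theorem pd_sum {ι : Type*} (s : Finset ι) (F : ι → E' n → ℝ) (i : Fin n) (x : E' n)
    (hF : ∀ k ∈ s, DifferentiableAt ℝ (F k) x) :
    pd (fun y => ∑ k ∈ s, F k y) i x = ∑ k ∈ s, pd (F k) i x := by
  rw [pd, fderiv_fun_sum hF]; simp [pd]

theorem pd_mul (F G : E' n → ℝ) (i : Fin n) (x : E' n)
    (hF : DifferentiableAt ℝ F x) (hG : DifferentiableAt ℝ G x) :
    pd (fun y => F y * G y) i x = pd F i x * G x + F x * pd G i x := by
  rw [pd, fderiv_fun_mul hF hG]; simp [pd]; ring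

theorem pd_sub (F G : E' n → ℝ) (i : Fin n) (x : E' n)
    (hF : DifferentiableAt ℝ F x) (hG : DifferentiableAt ℝ G x) :
    pd (fun y => F y - G y) i x = pd F i x - pd G i x := by
  rw [pd, fderiv_fun_sub hF hG]; simp [pd]

theorem pd_add (F G : E' n → ℝ) (i : Fin n) (x : E' n)
    (hF : DifferentiableAt ℝ F x) (hG : DifferentiableAt ℝ G x) :
    pd (fun y => F y + G y) i x = pd F i x + pd G i x := by
  rw [pd, fderiv_fun_add hF hG]; simp [pd]

end Helpers

/-- The Euclidean Laplacian `Δf(x) = Σᵢ ∂²f/∂xᵢ²(x)` of `f : ℝⁿ → ℝ`. -/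
def lap {n : ℕ} (f : EuclideanSpace ℝ (Fin n) → ℝ) (x : EuclideanSpace ℝ (Fin n)) : ℝ :=
  ∑ i : Fin n,
    fderiv ℝ (fun y => fderiv ℝ f y (EuclideanSpace.single i 1)) x (EuclideanSpace.single i 1)

/-- The `(i,j)` entry `∂²f/∂xᵢ∂xⱼ(x)` of the Hessian matrix of `f : ℝⁿ → ℝ`. -/
def hess {n : ℕ} (f : EuclideanSpace ℝ (Fin n) → ℝ) (x : EuclideanSpace ℝ (Fin n))
    (i j : Fin n) : ℝ :=
  fderiv ℝ (fun y => fderiv ℝ f y (EuclideanSpace.single j 1)) x (EuclideanSpace.single i 1)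

/-- The Witten Laplacian `L h = Δh - ∇φ·∇h`. -/
def wittenLap {n : ℕ} (φ h : EuclideanSpace ℝ (Fin n) → ℝ)
    (x : EuclideanSpace ℝ (Fin n)) : ℝ :=
  lap h x - ⟪gradient φ x, gradient h x⟫

/-- pointwise Bochner identity for the Witten Laplacian
(the Bochner-formula part of the paper's Lemma 6):
`(1/2) L(‖∇g‖²) = ‖∇²g‖_F² + ⟨∇g, ∇(Lg)⟩ + (∇g)ᵀ(∇²φ)(∇g)`. -/
theorem witten_bochner_identity
    (n : ℕ) (hn : 0 < n)
    (φ : EuclideanSpace ℝ (Fin n) → ℝ) (hφ : ContDiff ℝ 2 φ)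
    (g : EuclideanSpace ℝ (Fin n) → ℝ) (hg : ContDiff ℝ 3 g) :
    ∀ x : EuclideanSpace ℝ (Fin n),
      (1 / 2) * wittenLap φ (fun y => ‖gradient g y‖ ^ 2) x =
        (∑ i : Fin n, ∑ j : Fin n, hess g x i j ^ 2) +
          ⟪gradient g x, gradient (fun y => wittenLap φ g y) x⟫ +
          ∑ i : Fin n, ∑ j : Fin n, hess φ x i j * gradient g x i * gradient g x j := by
  intro x
  have hg2 : ContDiff ℝ 2 g := hg.of_le (by norm_num)
  have hga : ∀ j, ContDiff ℝ 2 (pd g j) := fun j => contDiff_pd (m := 2) hg (by norm_num) j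
  have hφb : ∀ i, ContDiff ℝ 1 (pd φ i) := fun i => contDiff_pd (m := 1) hφ (by norm_num) i
  have hA1 : ∀ i j, ContDiff ℝ 1 (pd (pd g j) i) :=
    fun i j => contDiff_pd (m := 1) (hga j) (by norm_num) i
  have dga : ∀ j (y : E' n), DifferentiableAt ℝ (pd g j) y :=
    fun j y => ((hga j).differentiable (by norm_num)) y
  have dφb : ∀ i (y : E' n), DifferentiableAt ℝ (pd φ i) y :=
    fun i y => ((hφb i).differentiable (by norm_num)) y
  have dA : ∀ i j (y : E' n), DifferentiableAt ℝ (pd (pd g j) i) y :=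
    fun i j y => ((hA1 i j).differentiable (by norm_num)) y
  -- step 1 : representation of ‖∇g‖²
  have hrep : (fun y => ‖gradient g y‖ ^ 2) = (fun y : E' n => ∑ j, pd g j y * pd g j y) := by
    funext y
    rw [← real_inner_self_eq_norm_sq, inner_sum_coord]
    simp only [grad_coord]
  -- step 2 : pd of that
  have pdh : ∀ (i : Fin n) (y : E' n), pd (fun z => ∑ j, pd g j z * pd g j z) i y
      = ∑ j, (pd (pd g j) i y * pd g j y + pd g j y * pd (pd g j) i y) := by
    intro i y
    rw [pd_sum _ _ _ _ (fun j _ => ((dga j y).fun_mul (dga j y)))]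
    exact Finset.sum_congr rfl fun j _ => pd_mul _ _ _ _ (dga j y) (dga j y)
  rw [hrep]
  have lapH : lap (fun y : E' n => ∑ j, pd g j y * pd g j y) x
      = ∑ i, ∑ j, ((pd (pd (pd g j) i) i x * pd g j x + pd (pd g j) i x * pd (pd g j) i x)
          + (pd (pd g j) i x * pd (pd g j) i x + pd g j x * pd (pd (pd g j) i) i x)) := by
    show ∑ i, pd (pd (fun y : E' n => ∑ j, pd g j y * pd g j y) i) i x = _
    refine Finset.sum_congr rfl fun i _ => ?_
    have e : pd (fun y : E' n => ∑ j, pd g j y * pd g j y) i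
        = fun y => ∑ j, (pd (pd g j) i y * pd g j y + pd g j y * pd (pd g j) i y) :=
      funext (pdh i)
    rw [e, pd_sum _ _ _ _
      (fun j _ => ((dA i j x).fun_mul (dga j x)).fun_add ((dga j x).fun_mul (dA i j x)))]
    refine Finset.sum_congr rfl fun j _ => ?_
    rw [pd_add _ _ _ _ ((dA i j x).fun_mul (dga j x)) ((dga j x).fun_mul (dA i j x)),
      pd_mul _ _ _ _ (dA i j x) (dga j x), pd_mul _ _ _ _ (dga j x) (dA i j x)]
  have innerφH : ⟪gradient φ x, gradient (fun y : E' n => ∑ j, pd g j y * pd g j y) x⟫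
      = ∑ i, pd φ i x * (∑ j, (pd (pd g j) i x * pd g j x + pd g j x * pd (pd g j) i x)) := by
    rw [inner_sum_coord]
    refine Finset.sum_congr rfl fun i _ => ?_
    rw [grad_coord, grad_coord, pdh]
  have Lrep : (fun y => wittenLap φ g y)
      = fun y : E' n => (∑ i, pd (pd g i) i y) - ∑ i, pd φ i y * pd g i y := by
    funext y
    show lap g y - ⟪gradient φ y, gradient g y⟫ = _
    rw [inner_sum_coord]
    simp only [grad_coord]
    rfl
  have innerGL : ⟪gradient g x, gradient (fun y => wittenLap φ g y) x⟫
      = ∑ j, pd g j x * ((∑ i, pd (pd (pd g i) i) j x)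
          - ∑ i, (pd (pd φ i) j x * pd g i x + pd φ i x * pd (pd g i) j x)) := by
    rw [inner_sum_coord]
    refine Finset.sum_congr rfl fun j _ => ?_
    rw [grad_coord, grad_coord, Lrep]
    rw [pd_sub _ _ _ _ (DifferentiableAt.fun_sum (fun i _ => dA i i x))
      (DifferentiableAt.fun_sum (fun i _ => (dφb i x).fun_mul (dga i x)))]
    rw [pd_sum _ _ _ _ (fun i _ => dA i i x),
      pd_sum _ _ _ _ (fun i _ => (dφb i x).fun_mul (dga i x))]
    congr 2
    refine Finset.sum_congr rfl fun i _ => ?_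
    rw [pd_mul _ _ _ _ (dφb i x) (dga i x)]
  show (1/2) * (lap (fun y : E' n => ∑ j, pd g j y * pd g j y) x
      - ⟪gradient φ x, gradient (fun y : E' n => ∑ j, pd g j y * pd g j y) x⟫) = _
  rw [lapH, innerφH, innerGL]
  show _ = (∑ i, ∑ j, pd (pd g j) i x ^ 2) + _ + ∑ i, ∑ j, pd (pd φ j) i x * gradient g x i * gradient g x j
  simp only [grad_coord]
  have hAx : ∀ i j, pd (pd g j) i x = pd (pd g i) j x := fun i j => pd_comm hg2 i j x
  have hBx : ∀ i j, pd (pd φ j) i x = pd (pd φ i) j x := fun i j => pd_comm hφ i j x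
  have hAfun : ∀ i j, pd (pd g j) i = pd (pd g i) j := fun i j => funext (pd_comm hg2 i j)
  have hT : ∀ i j, pd (pd (pd g i) i) j x = pd (pd (pd g j) i) i x := fun i j => by
    rw [← pd_comm (hga i) i j x, ← hAfun i j]
  have hmid : (∑ j, pd g j x * ((∑ i, pd (pd (pd g i) i) j x)
        - ∑ i, (pd (pd φ i) j x * pd g i x + pd φ i x * pd (pd g i) j x)))
      = ∑ i, ∑ j, (pd g j x * pd (pd (pd g j) i) i x
        - (pd (pd φ j) i x * pd g i x * pd g j x + pd φ i x * pd (pd g j) i x * pd g j x)) := by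
    have e : ∀ j, pd g j x * ((∑ i, pd (pd (pd g i) i) j x)
        - ∑ i, (pd (pd φ i) j x * pd g i x + pd φ i x * pd (pd g i) j x))
        = ∑ i, (pd g j x * pd (pd (pd g j) i) i x
          - (pd (pd φ j) i x * pd g i x * pd g j x + pd φ i x * pd (pd g j) i x * pd g j x)) := by
      intro j
      rw [mul_sub, Finset.mul_sum, Finset.mul_sum, ← Finset.sum_sub_distrib]
      refine Finset.sum_congr rfl fun i _ => ?_
      rw [hT i j, ← hBx i j, ← hAx i j]
      ring
    simp only [e]
    exact Finset.sum_comm ..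
  rw [hmid]
  simp only [Finset.mul_sum, ← Finset.sum_sub_distrib, ← Finset.sum_add_distrib]
  refine Finset.sum_congr rfl fun i _ => Finset.sum_congr rfl fun j _ => ?_
  ring
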